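/- Let R be the direct limit of a directed system of commutative rings (R_i)_{i∈I} with structural maps ε_i : R_i → R. Then the map sending a prime ideal q of R to the compatible family (ε_i^{-1}(q))_{i∈I} is a bijection from Spec(R) onto the inverse limit of the sets Spec(R_i) (with transition maps given by preimage along φ_i^j). -/

import Mathlib

section aux
variable {ι : Type*} [Preorder ι] (G : ι → Type*) [∀ i, CommRing (G i)]
  (f' : ∀ i j, i ≤ j → G i →+* G j) [DirectedSystem G fun i j h => f' i j h]
  [IsDirected ι (· ≤ ·)]

theorem my_eq_of {i j : ι} {a : G i} {b : G j}
    (h : Ring.DirectLimit.of G (fun i j h => f' i j h) i a =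
      Ring.DirectLimit.of G (fun i j h => f' i j h) j b) :
    ∃ (k : ι) (hik : i ≤ k) (hjk : j ≤ k), f' i k hik a = f' j k hjk b := by
  obtain ⟨k, hik, hjk⟩ := directed_of (· ≤ ·) i j
  have h0 : Ring.DirectLimit.of G (fun i j h => f' i j h) k
      (f' i k hik a - f' j k hjk b) = 0 := by
    rw [map_sub, Ring.DirectLimit.of_f, Ring.DirectLimit.of_f, h, sub_self]
  obtain ⟨l, hkl, hl⟩ := Ring.DirectLimit.of.zero_exact h0
  refine ⟨l, hik.trans hkl, hjk.trans hkl, ?_⟩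
  rw [map_sub, sub_eq_zero] at hl
  rwa [DirectedSystem.map_map (f := fun i j h => f' i j h),
    DirectedSystem.map_map (f := fun i j h => f' i j h)] at hl

end aux

theorem stmt6 {ι : Type*} [Preorder ι] [IsDirected ι (· ≤ ·)] [Nonempty ι]
    (G : ι → Type*) [∀ i, CommRing (G i)]
    (f' : ∀ i j, i ≤ j → G i →+* G j) [DirectedSystem G fun i j h => f' i j h] :
    Set.BijOn
      (fun (q : PrimeSpectrum (Ring.DirectLimit G fun i j h => f' i j h)) (i : ι) =>
        PrimeSpectrum.comap (Ring.DirectLimit.of G (fun i j h => f' i j h) i) q)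
      Set.univ
      {p : ∀ i, PrimeSpectrum (G i) |
        ∀ (i j : ι) (h : i ≤ j), PrimeSpectrum.comap (f' i j h) (p j) = p i} := by
  refine ⟨?_, ?_, ?_⟩
  · -- maps into
    intro q _ i j hij
    ext x
    simp only [PrimeSpectrum.comap_asIdeal, Ideal.mem_comap]
    rw [Ring.DirectLimit.of_f]
  · -- injective
    intro q _ q' _ h
    ext x
    obtain ⟨i, g, rfl⟩ := Ring.DirectLimit.exists_of x
    have h2 : PrimeSpectrum.comap (Ring.DirectLimit.of G (fun i j h => f' i j h) i) q
        = PrimeSpectrum.comap (Ring.DirectLimit.of G (fun i j h => f' i j h) i) q' := congrFun h i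
    constructor <;> intro hx
    · have h3 : g ∈ (PrimeSpectrum.comap (Ring.DirectLimit.of G (fun i j h => f' i j h) i) q).asIdeal := hx
      rw [h2] at h3; exact h3
    · have h3 : g ∈ (PrimeSpectrum.comap (Ring.DirectLimit.of G (fun i j h => f' i j h) i) q').asIdeal := hx
      rw [← h2] at h3; exact h3
  · -- surjective
    rintro p hp
    have hmem : ∀ i j (hij : i ≤ j) (g : G i),
        g ∈ (p i).asIdeal ↔ f' i j hij g ∈ (p j).asIdeal := by
      intro i j hij g
      rw [← hp i j hij]; rfl
    have hmem2 : ∀ {i j : ι} {a : G i} {b : G j},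
        Ring.DirectLimit.of G (fun i j h => f' i j h) i a =
          Ring.DirectLimit.of G (fun i j h => f' i j h) j b →
        a ∈ (p i).asIdeal → b ∈ (p j).asIdeal := by
      intro i j a b hab ha
      obtain ⟨k, hik, hjk, hk⟩ := my_eq_of G f' hab
      rw [hmem j k hjk, ← hk, ← hmem i k hik]
      exact ha
    let Q : Ideal (Ring.DirectLimit G fun i j h => f' i j h) :=
      { carrier := {x | ∃ i g, x = Ring.DirectLimit.of G (fun i j h => f' i j h) i g
          ∧ g ∈ (p i).asIdeal}
        zero_mem' := ⟨Classical.arbitrary ι, 0, by simp, zero_mem _⟩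
        add_mem' := by
          rintro x y ⟨i, a, rfl, ha⟩ ⟨j, b, rfl, hb⟩
          obtain ⟨k, hik, hjk⟩ := directed_of (· ≤ ·) i j
          refine ⟨k, f' i k hik a + f' j k hjk b, ?_, ?_⟩
          · rw [map_add, Ring.DirectLimit.of_f, Ring.DirectLimit.of_f]
          · exact add_mem ((hmem i k hik a).1 ha) ((hmem j k hjk b).1 hb)
        smul_mem' := by
          rintro r x ⟨i, a, rfl, ha⟩
          obtain ⟨j, b, rfl⟩ := Ring.DirectLimit.exists_of r
          obtain ⟨k, hik, hjk⟩ := directed_of (· ≤ ·) i j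
          refine ⟨k, f' j k hjk b * f' i k hik a, ?_, ?_⟩
          · simp only [smul_eq_mul, map_mul, Ring.DirectLimit.of_f]
          · exact Ideal.mul_mem_left _ _ ((hmem i k hik a).1 ha) }
    have hQmem : ∀ i (g : G i),
        Ring.DirectLimit.of G (fun i j h => f' i j h) i g ∈ Q ↔ g ∈ (p i).asIdeal := by
      intro i g
      constructor
      · rintro ⟨j, b, hb, hbp⟩
        exact hmem2 hb.symm hbp
      · intro hg; exact ⟨i, g, rfl, hg⟩
    have hQprime : Q.IsPrime := by
      constructor
      · intro htop
        have h1 : (1 : Ring.DirectLimit G fun i j h => f' i j h) ∈ Q := htop ▸ Submodule.mem_top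
        obtain ⟨i, g, hg, hgp⟩ := h1
        have h2 : (1 : G i) ∈ (p i).asIdeal := by
          refine hmem2 (i := i) (a := g) ?_ hgp
          rw [← hg, map_one]
        exact (p i).isPrime.ne_top (Ideal.eq_top_of_isUnit_mem _ h2 isUnit_one)
      · intro x y hxy
        obtain ⟨i, a, rfl⟩ := Ring.DirectLimit.exists_of x
        obtain ⟨j, b, rfl⟩ := Ring.DirectLimit.exists_of y
        obtain ⟨k, hik, hjk⟩ := directed_of (· ≤ ·) i j
        have hxy' : Ring.DirectLimit.of G (fun i j h => f' i j h) k
            (f' i k hik a * f' j k hjk b) ∈ Q := by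
          rwa [map_mul, Ring.DirectLimit.of_f, Ring.DirectLimit.of_f]
        rw [hQmem] at hxy'
        rcases (p k).isPrime.mem_or_mem hxy' with h | h
        · exact Or.inl ((hQmem i a).2 ((hmem i k hik a).2 h))
        · exact Or.inr ((hQmem j b).2 ((hmem j k hjk b).2 h))
    refine ⟨⟨Q, hQprime⟩, Set.mem_univ _, ?_⟩
    funext i
    ext g
    exact hQmem i g
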